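/- Let f be holomorphic near z ∈ ℂ with f′(z) ≠ 0, and let M(ζ) = (aζ + b)/(cζ + d) be a Möbius transformation with ad − bc ≠ 0 such that c·f(w) + d ≠ 0 for w near z. Then for every n ≥ 2, the Aharonov invariants satisfy ψ_n[M∘f](z) = ψ_n[f](z). -/

import Mathlib

open FormalMultilinearSeries in
lemma aux_coeff_zero (e : ℕ → ℂ) (R : ℝ) (hR : 0 < R)
    (h : ∀ w : ℂ, ‖w‖ < R → HasSum (fun m : ℕ => e m * w ^ m) 0) : ∀ m, e m = 0 := by
  set p := ofScalars ℂ e with hp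
  have hnorm : ∀ n, ‖p n‖ = ‖e n‖ := fun n => ofScalars_norm ℂ e n
  have hR2 : (0:ℝ) < R / 2 := by linarith
  set r : NNReal := ⟨R / 2, hR2.le⟩ with hr
  have hnw : ‖((R/2 : ℝ) : ℂ)‖ = R / 2 := by
    rw [Complex.norm_real, Real.norm_eq_abs, abs_of_pos hR2]
  have hw : ‖((R/2 : ℝ) : ℂ)‖ < R := by rw [hnw]; linarith
  have hrad : (r : ENNReal) ≤ p.radius := by
    have ht := (h _ hw).summable.tendsto_atTop_zero.norm
    refine p.le_radius_of_tendsto (l := 0) ?_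
    rw [show ‖(0:ℂ)‖ = 0 from norm_zero] at ht
    convert ht using 2 with n
    rw [hnorm, norm_mul, norm_pow, hnw]
    rfl
  have hcoeff : ∀ n, p.coeff n = e n := by
    intro n
    show (ofScalars ℂ e n) (fun _ => (1:ℂ)) = e n
    rw [FormalMultilinearSeries.ofScalars_apply_eq]
    simp
  have hball : HasFPowerSeriesOnBall (0 : ℂ → ℂ) p 0 r := by
    refine ⟨hrad, by exact_mod_cast hR2, fun {y} hy => ?_⟩
    have hy' : ‖y‖ < R := by
      rw [EMetric.mem_ball, edist_zero_right] at hy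
      have h1 : ‖y‖₊ < r := by exact_mod_cast hy
      have h2 : ‖y‖ < (R/2 : ℝ) := h1
      linarith
    have := h y hy'
    simp only [FormalMultilinearSeries.apply_eq_pow_smul_coeff, hcoeff, smul_eq_mul,
      Pi.zero_apply]
    convert this using 2 with n
    exacts [rfl, by ring]
  have hp0 : p = 0 := HasFPowerSeriesAt.eq_zero ⟨r, hball⟩
  have := (ofScalars_series_eq_zero ℂ).mp hp0
  exact fun m => congrFun this m


theorem aharonov_moebius_invariant (f : ℂ → ℂ) (z : ℂ)
    (hf : AnalyticAt ℂ f z) (hf' : deriv f z ≠ 0)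
    (a b c d : ℂ) (habcd : a * d - b * c ≠ 0)
    (hM : ∀ᶠ w in nhds z, c * f w + d ≠ 0)
    (ψ ψM : ℕ → ℂ) (r₁ r₂ : ℝ) (hr₁ : 0 < r₁) (hr₂ : 0 < r₂)
    (hψ : ∀ w : ℂ, w ≠ 0 → ‖w‖ < r₁ →
      HasSum (fun m : ℕ => ψ (m + 1) * w ^ m)
        (1 / w - deriv f z / (f (z + w) - f z)))
    (hψM : ∀ w : ℂ, w ≠ 0 → ‖w‖ < r₂ →
      HasSum (fun m : ℕ => ψM (m + 1) * w ^ m)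
        (1 / w - deriv (fun u => (a * f u + b) / (c * f u + d)) z /
          ((a * f (z + w) + b) / (c * f (z + w) + d) - (a * f z + b) / (c * f z + d))))
    (n : ℕ) (hn : 2 ≤ n) :
    ψM n = ψ n := by
  have hd0 : c * f z + d ≠ 0 := hM.self_of_nhds
  have hdf : DifferentiableAt ℂ f z := hf.differentiableAt
  set f' := deriv f z with hf'def
  set k := c * f' / (c * f z + d) with hk
  -- derivative of the Möbius composite
  have hF : deriv (fun u => (a * f u + b) / (c * f u + d)) z
      = (a * d - b * c) * f' / (c * f z + d) ^ 2 := by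
    have h1 : HasDerivAt (fun u => a * f u + b) (a * f') z := by
      simpa using ((hdf.hasDerivAt.const_mul a).add_const b)
    have h2 : HasDerivAt (fun u => c * f u + d) (c * f') z := by
      simpa using ((hdf.hasDerivAt.const_mul c).add_const d)
    rw [HasDerivAt.deriv (f := fun u => (a * f u + b) / (c * f u + d)) (h1.div h2 hd0)]
    congr 1
    ring
  -- translation map
  have h1 : Filter.Tendsto (fun w : ℂ => z + w) (nhds 0) (nhds z) := by
    have hc : Continuous (fun w : ℂ => z + w) := continuous_const.add continuous_id
    simpa using hc.tendsto 0
  -- f (z+w) ≠ f z on a punctured neighbourhood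
  have hΔ : ∀ᶠ w in nhdsWithin (0:ℂ) {0}ᶜ, f (z + w) - f z ≠ 0 := by
    have hg : AnalyticAt ℂ (fun u => f u - f z) z := hf.sub analyticAt_const
    rcases hg.eventually_eq_zero_or_eventually_ne_zero with hcase | hcase
    · exfalso
      apply hf'
      have heq : f =ᶠ[nhds z] fun _ => f z := hcase.mono fun u hu => sub_eq_zero.mp hu
      calc deriv f z = deriv (fun _ => f z) z := heq.deriv_eq
        _ = 0 := deriv_const _ _
    · have h2 : ∀ᶠ w in nhdsWithin (0:ℂ) {0}ᶜ, z + w ∈ ({z}ᶜ : Set ℂ) :=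
        eventually_mem_nhdsWithin.mono (fun w hw => by
          simp only [Set.mem_compl_iff, Set.mem_singleton_iff] at *
          exact fun h => hw (by linear_combination h))
      exact (tendsto_nhdsWithin_of_tendsto_nhds_of_eventually_within _
        (h1.mono_left nhdsWithin_le_nhds) h2).eventually hcase
  have hMM : ∀ᶠ w in nhdsWithin (0:ℂ) {0}ᶜ, c * f (z + w) + d ≠ 0 :=
    (h1.eventually hM).filter_mono nhdsWithin_le_nhds
  -- extract a radius
  obtain ⟨ε, hε, hεs⟩ := Metric.eventually_nhds_iff.mp
    ((eventually_nhdsWithin_iff).mp (hΔ.and hMM))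
  set R := min ε (min r₁ r₂) with hR
  have hRpos : 0 < R := lt_min hε (lt_min hr₁ hr₂)
  set e : ℕ → ℂ := fun m => (ψM (m + 1) - ψ (m + 1)) + (if m = 0 then k else 0) with he
  set c' : ℕ → ℂ := fun n => if n = 0 then 0 else e (n - 1) with hc'
  have key : ∀ w : ℂ, ‖w‖ < R → HasSum (fun n : ℕ => c' n * w ^ n) 0 := by
    intro w hw
    by_cases hw0 : w = 0
    · subst hw0
      have : (fun n : ℕ => c' n * (0:ℂ) ^ n) = fun _ => (0:ℂ) := by
        funext n
        cases n <;> simp [hc']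
      rw [this]
      exact hasSum_zero
    · have hdist : dist w 0 < ε := by
        rw [dist_zero_right]
        exact lt_of_lt_of_le hw (min_le_left _ _)
      obtain ⟨hΔw, hcw⟩ := hεs hdist (by simpa using hw0)
      have hwr₁ : ‖w‖ < r₁ :=
        lt_of_lt_of_le hw ((min_le_right _ _).trans (min_le_left _ _))
      have hwr₂ : ‖w‖ < r₂ :=
        lt_of_lt_of_le hw ((min_le_right _ _).trans (min_le_right _ _))
      have hΔF : (a * f (z + w) + b) / (c * f (z + w) + d) - (a * f z + b) / (c * f z + d)
          = (a * d - b * c) * (f (z + w) - f z) / ((c * f (z + w) + d) * (c * f z + d)) := by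
        rw [div_sub_div _ _ hcw hd0]
        ring
      have hkey : deriv (fun u => (a * f u + b) / (c * f u + d)) z /
          ((a * f (z + w) + b) / (c * f (z + w) + d) - (a * f z + b) / (c * f z + d))
          = f' / (f (z + w) - f z) + k := by
        rw [hF, hΔF, hk]
        field_simp
        ring
      have hT := hψM w hw0 hwr₂
      rw [hkey] at hT
      have hS := hψ w hw0 hwr₁
      have hdiff := hT.sub hS
      have hsingle : HasSum (fun m : ℕ => if m = 0 then k else 0) k := hasSum_ite_eq 0 k
      have hsum0 : HasSum (fun m : ℕ => e m * w ^ m) 0 := by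
        have h3 := hdiff.add hsingle
        convert h3 using 1
        · rfl
        · funext m
          rcases m with _ | m <;> simp [he] <;> ring
        · ring
      have hew := hsum0.mul_right w
      have hshift : HasSum (fun m : ℕ => c' (m + 1) * w ^ (m + 1)) 0 := by
        convert hew using 2 with m
        · rfl
        · simp [hc', pow_succ]
          ring
        · simp
      have := (hasSum_nat_add_iff (f := fun n => c' n * w ^ n) 1).mp hshift
      simpa [hc'] using this
  have hzero := aux_coeff_zero c' R hRpos key
  obtain ⟨m, rfl⟩ := Nat.exists_eq_add_of_le hn
  have := hzero (2 + m)
  have hne : ¬(2 + m = 0) := by omega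
  have h1m : ¬(2 + m - 1 = 0) := by omega
  simp only [hc', hne, if_false, he, h1m] at this
  have h2 : 2 + m - 1 + 1 = 2 + m := by omega
  rw [h2] at this
  simpa [sub_eq_zero] using this
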